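/- Let G be a snake graph, P a perfect matching of G, and i_1, …, i_r (r ≥ 1) a sequence of tile indices such that, setting Q_0 = P and Q_t = μ_{i_t} Q_{t−1}, each Q_{t−1} can twist on G_{i_t}, and Q_r = P. Then there exists t with 2 ≤ t ≤ r such that i_t = i_1. -/

import Mathlib

/-- An edge of the integer lattice: `(p, true)` is the horizontal unit segment
from `p` to `p + (1, 0)`, and `(p, false)` is the vertical unit segment from
`p` to `p + (0, 1)`. -/
abbrev LatticeEdge : Type := (ℤ × ℤ) × Bool

/-- A lattice edge is horizontal if it is parallel to the x-axis. -/
def IsHorizontalEdge (e : LatticeEdge) : Prop := e.2 = true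

/-- A lattice edge is vertical if it is parallel to the y-axis. -/
def IsVerticalEdge (e : LatticeEdge) : Prop := e.2 = false

/-- The two endpoints of a lattice edge. -/
def endpointsOf (e : LatticeEdge) : Set (ℤ × ℤ) :=
  if e.2 then {e.1, (e.1.1 + 1, e.1.2)} else {e.1, (e.1.1, e.1.2 + 1)}

/-- The south side of the unit tile with lower-left corner `c`. -/
def southSide (c : ℤ × ℤ) : LatticeEdge := (c, true)

/-- The north side of the unit tile with lower-left corner `c`. -/
def northSide (c : ℤ × ℤ) : LatticeEdge := ((c.1, c.2 + 1), true)

/-- The west side of the unit tile with lower-left corner `c`. -/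
def westSide (c : ℤ × ℤ) : LatticeEdge := (c, false)

/-- The east side of the unit tile with lower-left corner `c`. -/
def eastSide (c : ℤ × ℤ) : LatticeEdge := ((c.1 + 1, c.2), false)

/-- The four sides of the unit tile with lower-left corner `c`. -/
def tileSides (c : ℤ × ℤ) : Set LatticeEdge :=
  {southSide c, northSide c, westSide c, eastSide c}

/-- The four corners of the unit tile with lower-left corner `c`. -/
def tileCorners (c : ℤ × ℤ) : Set (ℤ × ℤ) :=
  {c, (c.1 + 1, c.2), (c.1, c.2 + 1), (c.1 + 1, c.2 + 1)}

/-- A snake graph with `d ≥ 1` tiles: tile `1` has lower-left corner `(0, 0)`,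
and each subsequent tile is the translate of the previous one by one unit to
the right or one unit up.  Tiles are indexed `1, …, d`; `corner i` is the
lower-left corner of tile `i`. -/
structure SnakeGraph where
  d : ℕ
  one_le_d : 1 ≤ d
  corner : ℕ → ℤ × ℤ
  corner_one : corner 1 = (0, 0)
  corner_succ : ∀ i, 1 ≤ i → i < d →
    corner (i + 1) = ((corner i).1 + 1, (corner i).2) ∨
      corner (i + 1) = ((corner i).1, (corner i).2 + 1)

namespace SnakeGraph

/-- The set of sides of tile `i` of `G`. -/
def tile (G : SnakeGraph) (i : ℕ) : Set LatticeEdge := tileSides (G.corner i)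

/-- The edge set of (the graph of) `G`: all sides of all tiles. -/
def edges (G : SnakeGraph) : Set LatticeEdge := ⋃ i ∈ Set.Icc 1 G.d, G.tile i

/-- The vertex set of `G`: all corners of all tiles. -/
def vertices (G : SnakeGraph) : Set (ℤ × ℤ) :=
  ⋃ i ∈ Set.Icc 1 G.d, tileCorners (G.corner i)

/-- A perfect matching of `G`: a set of edges of `G` such that every vertex of
`G` is incident to exactly one edge of the set. -/
def IsPerfectMatching (G : SnakeGraph) (P : Set LatticeEdge) : Prop :=
  P ⊆ G.edges ∧ ∀ v ∈ G.vertices, ∃! e, e ∈ P ∧ v ∈ endpointsOf e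

/-- `P` can twist on tile `i` if two of the four sides of tile `i` belong to `P`. -/
def CanTwist (G : SnakeGraph) (P : Set LatticeEdge) (i : ℕ) : Prop :=
  1 ≤ i ∧ i ≤ G.d ∧ (P ∩ G.tile i).ncard = 2

/-- The twist of `P` on tile `i`: replace the sides of tile `i` belonging to
`P` by the other sides of tile `i`. -/
def twist (G : SnakeGraph) (i : ℕ) (P : Set LatticeEdge) : Set LatticeEdge :=
  (P \ G.tile i) ∪ (G.tile i \ P)

/-- A boundary edge of `G`: an edge which is a side of exactly one tile. -/
def IsBoundaryEdge (G : SnakeGraph) (e : LatticeEdge) : Prop :=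
  ∃! i, (1 ≤ i ∧ i ≤ G.d) ∧ e ∈ G.tile i

/-- `P` is the minimal matching `P₋` of `G`: the perfect matching consisting
only of boundary edges which contains no vertical side of tile `1`. -/
def IsMinimalMatching (G : SnakeGraph) (P : Set LatticeEdge) : Prop :=
  G.IsPerfectMatching P ∧ (∀ e ∈ P, G.IsBoundaryEdge e) ∧
    ∀ e ∈ P ∩ G.tile 1, IsHorizontalEdge e

/-- `P` is the maximal matching `P₊` of `G`: the perfect matching consisting
only of boundary edges other than the minimal one, i.e. the one containing a
vertical side of tile `1`. -/
def IsMaximalMatching (G : SnakeGraph) (P : Set LatticeEdge) : Prop :=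
  G.IsPerfectMatching P ∧ (∀ e ∈ P, G.IsBoundaryEdge e) ∧
    ∃ e ∈ P ∩ G.tile 1, IsVerticalEdge e

/-- `G` is a straight snake graph: every tile is the translate of the previous
one by one unit to the right. -/
def IsStraight (G : SnakeGraph) : Prop :=
  ∀ i, 1 ≤ i → i < G.d → G.corner (i + 1) = ((G.corner i).1 + 1, (G.corner i).2)

end SnakeGraph


private lemma corner_sum (G : SnakeGraph) :
    ∀ j, 1 ≤ j → j ≤ G.d → (G.corner j).1 + (G.corner j).2 = (j : ℤ) - 1 := by
  intro j
  induction j with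
  | zero => omega
  | succ n ih =>
    intro h1 h2
    by_cases hn : n = 0
    · subst hn
      rw [G.corner_one]
      norm_num
    · have hn1 : 1 ≤ n := by omega
      have hnd : n < G.d := by omega
      have hih := ih hn1 (le_of_lt hnd)
      rcases G.corner_succ n hn1 hnd with h' | h' <;> rw [h'] <;> push_cast <;>
        simp <;> omega

private lemma lvl_of_mem_tile (G : SnakeGraph) {j : ℕ} (h1 : 1 ≤ j) (h2 : j ≤ G.d)
    {e : LatticeEdge} (he : e ∈ G.tile j) :
    e.1.1 + e.1.2 = (j : ℤ) - 1 ∨ e.1.1 + e.1.2 = (j : ℤ) := by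
  have hs := corner_sum G j h1 h2
  simp only [SnakeGraph.tile, tileSides, southSide, northSide, westSide, eastSide,
    Set.mem_insert_iff, Set.mem_singleton_iff] at he
  rcases he with h | h | h | h <;> subst h <;> simp <;> omega

private lemma mem_twist_iff (G : SnakeGraph) (i : ℕ) (Q : Set LatticeEdge) (e : LatticeEdge) :
    e ∈ G.twist i Q ↔ ((e ∈ Q) ↔ e ∉ G.tile i) := by
  by_cases h : e ∈ G.tile i <;>
    simp [SnakeGraph.twist, Set.mem_union, Set.mem_diff, h]

/-- If a sequence of twists (with tile indices `idx 0, idx 1, …, idx (r-1)`,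
`r ≥ 1`) takes a perfect matching `P` of a snake graph `G` back to itself,
then some later twist in the sequence is performed on the same tile as the
first one. -/
theorem twist_cycle_repeats_first
    (G : SnakeGraph) (P : Set LatticeEdge) (hP : G.IsPerfectMatching P)
    (r : ℕ) (hr : 1 ≤ r) (idx : ℕ → ℕ) (R : ℕ → Set LatticeEdge)
    (h0 : R 0 = P) (hrP : R r = P)
    (hstep : ∀ t, t < r → G.CanTwist (R t) (idx t) ∧ R (t + 1) = G.twist (idx t) (R t)) :
    ∃ t, 1 ≤ t ∧ t < r ∧ idx t = idx 0 := by
  by_contra hcon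
  push_neg at hcon
  obtain ⟨htw0, hR1⟩ := hstep 0 (by omega)
  obtain ⟨hi1, hid, -⟩ := htw0
  set i := idx 0 with hi
  set c := G.corner i with hc
  have hs : c.1 + c.2 = (i : ℤ) - 1 := corner_sum G i hi1 hid
  have key : ∃ e : LatticeEdge, e ∈ G.tile i ∧
      ∀ j, 1 ≤ j → j ≤ G.d → j ≠ i → e ∉ G.tile j := by
    by_cases hd : i < G.d
    · rcases G.corner_succ i hi1 hd with hdir | hdir
      · refine ⟨northSide c, ?_, ?_⟩
        · simp [SnakeGraph.tile, tileSides, ← hc]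
        · intro j hj1 hjd hji hmem
          have hl := lvl_of_mem_tile G hj1 hjd hmem
          simp only [northSide] at hl
          have hj : j = i + 1 := by omega
          subst hj
          rw [SnakeGraph.tile, hdir] at hmem
          simp [tileSides, northSide, southSide, westSide, eastSide, Prod.ext_iff] at hmem
          rw [← hc] at hmem
          omega
      · refine ⟨eastSide c, ?_, ?_⟩
        · simp [SnakeGraph.tile, tileSides, ← hc]
        · intro j hj1 hjd hji hmem
          have hl := lvl_of_mem_tile G hj1 hjd hmem
          simp only [eastSide] at hl
          have hj : j = i + 1 := by omega
          subst hj
          rw [SnakeGraph.tile, hdir] at hmem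
          simp [tileSides, northSide, southSide, westSide, eastSide, Prod.ext_iff] at hmem
          rw [← hc] at hmem
          omega
    · refine ⟨northSide c, ?_, ?_⟩
      · simp [SnakeGraph.tile, tileSides, ← hc]
      · intro j hj1 hjd hji hmem
        have hl := lvl_of_mem_tile G hj1 hjd hmem
        simp only [northSide] at hl
        omega
  obtain ⟨e, heT, hpriv⟩ := key
  have hflip : e ∈ R 1 ↔ e ∉ P := by
    rw [hR1, h0, mem_twist_iff]
    simp [heT]
  have hsame : ∀ t, 1 ≤ t → t ≤ r → (e ∈ R t ↔ e ∉ P) := by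
    intro t
    induction t with
    | zero => omega
    | succ n ih =>
      intro h1 h2
      by_cases hn : n = 0
      · subst hn; exact hflip
      · have hn1 : 1 ≤ n := by omega
        obtain ⟨htw, hRn⟩ := hstep n (by omega)
        have hne : idx n ≠ i := hcon n hn1 (by omega)
        have heN : e ∉ G.tile (idx n) := hpriv _ htw.1 htw.2.1 hne
        rw [hRn, mem_twist_iff]
        have := ih hn1 (by omega)
        tauto
  have hfin := hsame r hr le_rfl
  rw [hrP] at hfin
  tauto
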